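/- Let c be a real number such that for every real μ > 1, log₂(e·(μ - c)) ≥ log₂(μ - 1) - μ·log₂(1 - 1/μ). Then c ≤ 1/2. -/

import Mathlib

open Real

private lemma log_one_sub_le (t : ℝ) (ht : 0 < t) (ht2 : t ≤ 1/2) :
    Real.log (1 - t) ≤ -(t + t^2/2) + 2*t^3 := by
  have habs : |t| < 1 := by rw [abs_of_pos ht]; linarith
  have h := Real.abs_log_sub_add_sum_range_le habs 2
  have hsum : (∑ i ∈ Finset.range 2, t ^ (i + 1) / (i + 1)) = t + t^2/2 := by
    simp [Finset.sum_range_succ]; ring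
  rw [hsum, abs_of_pos ht] at h
  have h1 := abs_le.1 h
  have hfrac : t^3 / (1 - t) ≤ 2*t^3 := by
    rw [div_le_iff₀ (by linarith)]
    nlinarith [pow_pos ht 3]
  calc Real.log (1 - t) ≤ t^3 / (1-t) - (t + t^2/2) := by linarith [h1.2]
    _ ≤ -(t + t^2/2) + 2*t^3 := by linarith

private lemma key_ineq (c μ : ℝ) (h2 : 2 ≤ μ) (hc : c + 1 ≤ μ)
    (hb : Real.logb 2 (Real.exp 1 * (μ - c)) ≥
      Real.logb 2 (μ - 1) - μ * Real.logb 2 (1 - 1/μ)) :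
    c ≤ 1/2 + 5/(2*μ) := by
  have hμ0 : (0:ℝ) < μ := by linarith
  have hμ1 : (1:ℝ) < μ := by linarith
  have ht : 0 < 1/μ := by positivity
  have ht2 : 1/μ ≤ 1/2 := by
    rw [div_le_div_iff₀ hμ0 two_pos]; linarith
  have hμc : 0 < μ - c := by linarith
  have hμ1' : 0 < μ - 1 := by linarith
  have h1t : 0 < 1 - 1/μ := by linarith
  -- translate logb inequality to log inequality
  have hlog2 : (0:ℝ) < Real.log 2 := Real.log_pos one_lt_two
  have hraw : Real.log (Real.exp 1 * (μ - c)) ≥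
      Real.log (μ - 1) - μ * Real.log (1 - 1/μ) := by
    have := hb
    unfold Real.logb at this
    rw [ge_iff_le, ← sub_nonneg] at this ⊢
    have h' := mul_nonneg (le_of_lt hlog2) this
    have : (Real.log (Real.exp 1 * (μ - c)) / Real.log 2 -
        (Real.log (μ - 1) / Real.log 2 - μ * (Real.log (1 - 1/μ) / Real.log 2))) * Real.log 2
        = Real.log (Real.exp 1 * (μ - c)) -
        (Real.log (μ - 1) - μ * Real.log (1 - 1/μ)) := by
      field_simp
    nlinarith [this]
  -- exponentiate
  have hexp : Real.exp 1 * (μ - c) ≥ (μ - 1) * Real.exp (-(μ * Real.log (1 - 1/μ))) := by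
    have h1 : Real.exp (Real.log (μ - 1) - μ * Real.log (1 - 1/μ)) ≤
        Real.exp (Real.log (Real.exp 1 * (μ - c))) := Real.exp_le_exp.2 hraw
    rw [Real.exp_log (by positivity), Real.exp_sub, Real.exp_log hμ1',
      div_le_iff₀ (Real.exp_pos _)] at h1
    rw [Real.exp_neg, ge_iff_le, mul_inv_le_iff₀ (Real.exp_pos _)]
    linarith
  -- set g := -μ log(1-1/μ) - 1 ≥ 1/(2μ) - 2/μ²
  set g : ℝ := -(μ * Real.log (1 - 1/μ)) - 1 with hg
  clear_value g
  have hgege : g ≥ 1/(2*μ) - 2/μ^2 := by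
    have := log_one_sub_le (1/μ) ht ht2
    have hμlog : μ * Real.log (1 - 1/μ) ≤ μ * (-(1/μ + (1/μ)^2/2) + 2*(1/μ)^3) :=
      mul_le_mul_of_nonneg_left this (le_of_lt hμ0)
    have hcalc : μ * (-(1/μ + (1/μ)^2/2) + 2*(1/μ)^3) = -1 - 1/(2*μ) + 2/μ^2 := by
      field_simp; ring
    rw [hcalc] at hμlog
    rw [hg]; linarith
  -- μ - c ≥ (μ-1) * exp g ≥ (μ-1)(1+g)
  have hexp2 : μ - c ≥ (μ - 1) * Real.exp g := by
    have hrw : Real.exp (-(μ * Real.log (1 - 1/μ))) = Real.exp g * Real.exp 1 := by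
      rw [hg, ← Real.exp_add]; ring_nf
    rw [hrw] at hexp
    have he : (0:ℝ) < Real.exp 1 := Real.exp_pos 1
    nlinarith [Real.exp_pos g]
  have h1g : g + 1 ≤ Real.exp g := Real.add_one_le_exp g
  have : μ - c ≥ (μ - 1) * (1 + g) := by nlinarith
  have : μ - c ≥ (μ - 1) * (1 + (1/(2*μ) - 2/μ^2)) := by
    have hm : (μ - 1) * (1/(2*μ) - 2/μ^2) ≤ (μ - 1) * g :=
      mul_le_mul_of_nonneg_left hgege (le_of_lt hμ1')
    have e1 : (μ - 1) * (1 + (1/(2*μ) - 2/μ^2))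
        = (μ - 1) + (μ - 1) * (1/(2*μ) - 2/μ^2) := by ring
    have e2 : (μ - 1) * (1 + g) = (μ - 1) + (μ - 1) * g := by ring
    rw [e1]; rw [e2] at this; linarith
  have hfinal : (μ - 1) * (1 + (1/(2*μ) - 2/μ^2)) = μ - 1/2 - 5/(2*μ) + 2/μ^2 := by
    field_simp; ring
  rw [hfinal] at this
  have : 2/μ^2 ≥ 0 := by positivity
  linarith

theorem optimal_constant_le_half (c : ℝ)
    (hbound : ∀ μ : ℝ, 1 < μ →
      Real.logb 2 (Real.exp 1 * (μ - c)) ≥ Real.logb 2 (μ - 1) - μ * Real.logb 2 (1 - 1/μ)) :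
    c ≤ 1 / 2 := by
  by_contra hcon
  push_neg at hcon
  set ε := c - 1/2 with hε
  have hεpos : 0 < ε := by simp [hε]; linarith
  set μ := max (c + 1) (max 2 (3/ε)) with hμ
  have h2 : 2 ≤ μ := le_trans (le_max_left _ _) (le_max_right _ _)
  have hc1 : c + 1 ≤ μ := le_max_left _ _
  have h3ε : 3/ε ≤ μ := le_trans (le_max_right _ _) (le_max_right _ _)
  have hμpos : 0 < μ := by linarith
  have hkey := key_ineq c μ h2 hc1 (hbound μ (by linarith))
  have h5 : 5/(2*μ) ≤ 5*ε/6 := by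
    rw [div_le_div_iff₀ (by linarith) (by norm_num)]
    have : 3 ≤ ε * μ := by
      rw [← div_le_iff₀' hεpos] at *
      linarith [h3ε]
    nlinarith
  have : c ≤ 1/2 + 5*ε/6 := by linarith
  simp [hε] at this ⊢
  linarith
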